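/- Let 0 < η < 1 and f ∈ C²([0,η], ℝ₊). Let A = (a, f(a)) and B = (b, f(b)) with 0 ≤ a < b ≤ η be points on the graph C_f of f, let 𝒞 = [AB] be the chord, and let arc(AB) be the arc of C_f between A and B. Then ℋ¹(𝒞) ≤ ℋ¹(arc(AB)) ≤ ℋ¹(𝒞)·(1 + (b−a)‖f''‖_∞(2‖f'‖_∞ + ‖f''‖_∞(b−a))). -/

import Mathlib

noncomputable section
open Set

set_option maxHeartbeats 1000000 in
/-- comparison between the length of a chord of the graph of a `C²`
function `f : [0,η] → ℝ₊` and the length of the corresponding arc: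
`ℋ¹(𝒞) ≤ ℋ¹(arc(AB)) ≤ ℋ¹(𝒞)·(1 + (b−a)‖f''‖_∞(2‖f'‖_∞ + ‖f''‖_∞(b−a)))`. -/
theorem stmt6 (η a b : ℝ) (f : ℝ → ℝ) (M1 M2 : ℝ)
    (hη0 : 0 < η) (hη1 : η < 1)
    (hf : ContDiff ℝ 2 f) (hfpos : ∀ x ∈ Icc (0:ℝ) η, 0 ≤ f x)
    (ha : 0 ≤ a) (hab : a < b) (hb : b ≤ η)
    (hM1 : M1 = sSup ((fun x => |deriv f x|) '' Icc (0:ℝ) η))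
    (hM2 : M2 = sSup ((fun x => |deriv (deriv f) x|) '' Icc (0:ℝ) η)) :
    Real.sqrt ((b - a) ^ 2 + (f b - f a) ^ 2) ≤ (∫ x in a..b, Real.sqrt (1 + deriv f x ^ 2)) ∧
    (∫ x in a..b, Real.sqrt (1 + deriv f x ^ 2)) ≤
      Real.sqrt ((b - a) ^ 2 + (f b - f a) ^ 2) *
        (1 + (b - a) * M2 * (2 * M1 + M2 * (b - a))) := by
  -- basic differentiability facts
  have hd1 : Differentiable ℝ f := hf.differentiable (by norm_num)
  have h2 : ContDiff ℝ ((1:ℕ∞)+1) f := by norm_num; exact hf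
  have hcd1 : ContDiff ℝ 1 (deriv f) := (contDiff_succ_iff_deriv.mp h2).2.2
  have hd2 : Differentiable ℝ (deriv f) := hcd1.differentiable (by norm_num)
  have hcont1 : Continuous (deriv f) := hd2.continuous
  have hcont2 : Continuous fun x => Real.sqrt (1 + deriv f x ^ 2) :=
    (continuous_const.add (hcont1.pow 2)).sqrt
  obtain ⟨p, hp⟩ : ∃ p : ℝ, p = b - a := ⟨_, rfl⟩
  obtain ⟨q, hq⟩ : ∃ q : ℝ, q = f b - f a := ⟨_, rfl⟩
  obtain ⟨L, hL⟩ : ∃ L : ℝ, L = Real.sqrt (p ^ 2 + q ^ 2) := ⟨_, rfl⟩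
  have hp0 : 0 < p := by rw [hp]; linarith
  have hLp : p ≤ L := by
    rw [hL]
    calc p = Real.sqrt (p ^ 2) := (Real.sqrt_sq hp0.le).symm
    _ ≤ Real.sqrt (p ^ 2 + q ^ 2) := Real.sqrt_le_sqrt (by nlinarith)
  have hL0 : 0 < L := lt_of_lt_of_le hp0 hLp
  have hL2 : L * L = p ^ 2 + q ^ 2 := by
    rw [hL]; exact Real.mul_self_sqrt (by positivity)
  have hsub : Icc a b ⊆ Icc (0:ℝ) η := Icc_subset_Icc ha hb
  -- M1 and M2 are upper bounds
  have hbdd1 : BddAbove ((fun x => |deriv f x|) '' Icc (0:ℝ) η) :=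
    (isCompact_Icc.image_of_continuousOn (hcont1.abs.continuousOn)).bddAbove
  have hbdd2 : BddAbove ((fun x => |deriv (deriv f) x|) '' Icc (0:ℝ) η) :=
    (isCompact_Icc.image_of_continuousOn
      ((hcd1.continuous_deriv le_rfl).abs.continuousOn)).bddAbove
  have hB1 : ∀ x ∈ Icc (0:ℝ) η, |deriv f x| ≤ M1 := fun x hx => by
    rw [hM1]; exact le_csSup hbdd1 (mem_image_of_mem _ hx)
  have hB2 : ∀ x ∈ Icc (0:ℝ) η, |deriv (deriv f) x| ≤ M2 := fun x hx => by
    rw [hM2]; exact le_csSup hbdd2 (mem_image_of_mem _ hx)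
  have h0mem : (0:ℝ) ∈ Icc (0:ℝ) η := ⟨le_rfl, hη0.le⟩
  have hM1nn : 0 ≤ M1 := le_trans (abs_nonneg _) (hB1 0 h0mem)
  have hM2nn : 0 ≤ M2 := le_trans (abs_nonneg _) (hB2 0 h0mem)
  -- Lipschitz estimate for deriv f on [0,η]
  have hLip : ∀ x ∈ Icc (0:ℝ) η, ∀ y ∈ Icc (0:ℝ) η,
      |deriv f y - deriv f x| ≤ M2 * |y - x| := by
    intro x hx y hy
    have := Convex.norm_image_sub_le_of_norm_deriv_le (f := deriv f)
      (fun z _ => hd2 z) (fun z hz => hB2 z hz) (convex_Icc 0 η) hx hy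
    simpa using this
  -- integrability
  have hInt : IntervalIntegrable (fun x => Real.sqrt (1 + deriv f x ^ 2))
      MeasureTheory.volume a b := hcont2.intervalIntegrable a b
  -- FTC
  have hFTC : (∫ x in a..b, deriv f x) = q := by
    rw [hq]
    exact intervalIntegral.integral_deriv_eq_sub (fun x _ => hd1 x)
      (hcont1.intervalIntegrable a b)
  constructor
  · -- lower bound
    rw [← hp, ← hq, ← hL]
    have hpt : ∀ x ∈ Icc a b, p + q * deriv f x ≤ L * Real.sqrt (1 + deriv f x ^ 2) := by
      intro x _
      obtain ⟨s, hs⟩ : ∃ s : ℝ, s = deriv f x := ⟨_, rfl⟩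
      rw [← hs]
      have h1 : (p + q * s) ^ 2 ≤ (p ^ 2 + q ^ 2) * (1 + s ^ 2) := by
        nlinarith [sq_nonneg (p * s - q)]
      calc p + q * s ≤ |p + q * s| := le_abs_self _
      _ = Real.sqrt ((p + q * s) ^ 2) := (Real.sqrt_sq_eq_abs _).symm
      _ ≤ Real.sqrt ((p ^ 2 + q ^ 2) * (1 + s ^ 2)) := Real.sqrt_le_sqrt h1
      _ = L * Real.sqrt (1 + s ^ 2) := by
          rw [Real.sqrt_mul (by positivity), ← hL]
    have hIl : IntervalIntegrable (fun x => p + q * deriv f x) MeasureTheory.volume a b :=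
      (continuous_const.add (continuous_const.mul hcont1)).intervalIntegrable a b
    have hIr : IntervalIntegrable (fun x => L * Real.sqrt (1 + deriv f x ^ 2))
        MeasureTheory.volume a b := (continuous_const.mul hcont2).intervalIntegrable a b
    have hmono := intervalIntegral.integral_mono_on hab.le hIl hIr hpt
    have hlhs : (∫ x in a..b, (p + q * deriv f x)) = p ^ 2 + q ^ 2 := by
      rw [intervalIntegral.integral_add (g := fun x => q * deriv f x) (intervalIntegrable_const)
        ((continuous_const.mul hcont1 : Continuous fun x => q * deriv f x).intervalIntegrable a b),
        intervalIntegral.integral_const, intervalIntegral.integral_const_mul, hFTC,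
        smul_eq_mul, ← hp]
      ring
    have hrhs : (∫ x in a..b, L * Real.sqrt (1 + deriv f x ^ 2))
        = L * ∫ x in a..b, Real.sqrt (1 + deriv f x ^ 2) :=
      intervalIntegral.integral_const_mul _ _
    rw [hlhs, hrhs, ← hL2] at hmono
    exact le_of_mul_le_mul_left hmono hL0
  · -- upper bound
    rw [← hp, ← hq, ← hL]
    obtain ⟨c, hc, hslope⟩ := exists_deriv_eq_slope f hab (hd1.continuous.continuousOn)
      (hd1.differentiableOn)
    have hcmem : c ∈ Icc a b := ⟨hc.1.le, hc.2.le⟩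
    have hcη : c ∈ Icc (0:ℝ) η := hsub hcmem
    obtain ⟨t, ht⟩ : ∃ t : ℝ, t = deriv f c := ⟨_, rfl⟩
    have hslope' : t = q / p := by rw [ht, hslope, ← hp, ← hq]
    have h3 : |t| ≤ M1 := by rw [ht]; exact hB1 c hcη
    have hT : ∀ y ∈ Icc (0:ℝ) η, |deriv f y - t| ≤ M2 * |y - c| := by
      intro y hy; rw [ht]; exact hLip c hcη y hy
    have hchord : L = p * Real.sqrt (1 + t ^ 2) := by
      have hne : p ≠ 0 := hp0.ne'
      have h1 : 1 + t ^ 2 = (p ^ 2 + q ^ 2) / p ^ 2 := by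
        rw [hslope']; field_simp
      rw [hL, h1, Real.sqrt_div (by positivity), Real.sqrt_sq hp0.le]
      field_simp
    -- pointwise upper estimate
    have hpt : ∀ x ∈ Icc a b,
        Real.sqrt (1 + deriv f x ^ 2) ≤ Real.sqrt (1 + t ^ 2) + M1 * M2 * p := by
      intro x hx
      have hxη : x ∈ Icc (0:ℝ) η := hsub hx
      have h1 : |deriv f x - t| ≤ M2 * p := by
        have h := hT x hxη
        have hxc : |x - c| ≤ p := by
          rw [hp, abs_le]
          constructor
          · linarith [hx.1, hcmem.2]
          · linarith [hx.2, hcmem.1]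
        calc |deriv f x - t| ≤ M2 * |x - c| := h
        _ ≤ M2 * p := by nlinarith
      have h2 : |deriv f x| ≤ M1 := hB1 x hxη
      obtain ⟨s, hs⟩ : ∃ s : ℝ, s = deriv f x := ⟨_, rfl⟩
      rw [← hs] at h1 h2 ⊢
      have h4 : |s ^ 2 - t ^ 2| ≤ 2 * M1 * (M2 * p) := by
        have he : s ^ 2 - t ^ 2 = (s + t) * (s - t) := by ring
        rw [he, abs_mul]
        have h5 : |s + t| ≤ 2 * M1 := by
          calc |s + t| ≤ |s| + |t| := abs_add_le _ _
          _ ≤ 2 * M1 := by linarith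
        exact mul_le_mul h5 h1 (abs_nonneg _) (by linarith)
      obtain ⟨A, hAdef⟩ : ∃ A : ℝ, A = Real.sqrt (1 + t ^ 2) := ⟨_, rfl⟩
      obtain ⟨d, hddef⟩ : ∃ d : ℝ, d = |s ^ 2 - t ^ 2| := ⟨_, rfl⟩
      rw [← hddef] at h4
      rw [← hAdef]
      have hA2 : A ^ 2 = 1 + t ^ 2 := by rw [hAdef]; exact Real.sq_sqrt (by positivity)
      have hA0 : 0 ≤ A := by rw [hAdef]; exact Real.sqrt_nonneg _
      have hA : (1:ℝ) ≤ A := by nlinarith [sq_nonneg t]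
      have hd0 : 0 ≤ d := by rw [hddef]; exact abs_nonneg _
      have hle : s ^ 2 - t ^ 2 ≤ d := by rw [hddef]; exact le_abs_self _
      have hAd : d ≤ A * d := le_mul_of_one_le_left hd0 hA
      have hkey : Real.sqrt (1 + s ^ 2) ≤ A + d / 2 := by
        have hst : 1 + s ^ 2 ≤ (A + d / 2) ^ 2 := by nlinarith [sq_nonneg d]
        calc Real.sqrt (1 + s ^ 2)
            ≤ Real.sqrt ((A + d / 2) ^ 2) := Real.sqrt_le_sqrt hst
        _ = A + d / 2 := Real.sqrt_sq (by positivity)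
      calc Real.sqrt (1 + s ^ 2) ≤ A + d / 2 := hkey
      _ ≤ A + M1 * M2 * p := by linarith
    have hIc : IntervalIntegrable (fun _ : ℝ => Real.sqrt (1 + t ^ 2) + M1 * M2 * p)
        MeasureTheory.volume a b := intervalIntegrable_const
    have hmono := intervalIntegral.integral_mono_on hab.le hInt hIc hpt
    rw [intervalIntegral.integral_const, smul_eq_mul, ← hp] at hmono
    have harc : (∫ x in a..b, Real.sqrt (1 + deriv f x ^ 2))
        ≤ L + M1 * M2 * p ^ 2 := by
      calc (∫ x in a..b, Real.sqrt (1 + deriv f x ^ 2))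
          ≤ p * (Real.sqrt (1 + t ^ 2) + M1 * M2 * p) := hmono
      _ = p * Real.sqrt (1 + t ^ 2) + M1 * M2 * p ^ 2 := by ring
      _ = L + M1 * M2 * p ^ 2 := by rw [hchord]
    have e1 : M1 * M2 * (p * p) ≤ M1 * M2 * (L * p) :=
      mul_le_mul_of_nonneg_left (mul_le_mul_of_nonneg_right hLp hp0.le)
        (mul_nonneg hM1nn hM2nn)
    have e2 : 0 ≤ L * (p * M2 * (M2 * p)) := by
      have := mul_nonneg (mul_nonneg (mul_nonneg hL0.le hp0.le) hM2nn)
        (mul_nonneg hM2nn hp0.le)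
      nlinarith [this]
    have hfinal : L + M1 * M2 * p ^ 2 ≤ L * (1 + p * M2 * (2 * M1 + M2 * p)) := by
      nlinarith [e1, e2, mul_nonneg (mul_nonneg hM1nn hM2nn) (mul_nonneg hp0.le hp0.le)]
    linarith [harc, hfinal]
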